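/- Let X be an invertible k-nonnegative n×n real matrix with k ≥ 2, and suppose X_{i,j} = 0 for some indices i, j. Then: (1) i ≠ j; (2) if i < j, then X_{i',j'} = 0 for all i' ≤ i and j' ≥ j; (3) if i > j, then X_{i',j'} = 0 for all i' ≥ i and j' ≤ j. -/

import Mathlib

open Matrix

/-- A square real matrix is `k`-nonnegative if every minor of order at most `k`
(indexed by strictly increasing row and column selections) is nonnegative. -/
def IsKNonneg {n : ℕ} (k : ℕ) (X : Matrix (Fin n) (Fin n) ℝ) : Prop :=
  ∀ m : ℕ, m ≤ k → ∀ I J : Fin m → Fin n, StrictMono I → StrictMono J →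
    0 ≤ (X.submatrix I J).det

/-- Zero entries of an invertible `k`-nonnegative matrix (`k ≥ 2`) cannot lie on the
diagonal, and cast a "shadow" to the northeast (if above the diagonal) or to the
southwest (if below the diagonal). -/

lemma det_eq_zero_of_ne_block {n : ℕ} (X : Matrix (Fin n) (Fin n) ℝ) (i : Fin n)
    (h : ∀ a b : Fin n, a ≤ i → i ≤ b → X a b = 0) : X.det = 0 := by
  rw [Matrix.det_apply]
  apply Finset.sum_eq_zero
  intro σ _
  have hex : ∃ b : Fin n, i ≤ b ∧ σ b ≤ i := by
    by_contra hc
    push_neg at hc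
    have hcard : (Finset.univ.filter (fun b : Fin n => i ≤ b)).card ≤
        (Finset.univ.filter (fun b : Fin n => i < b)).card := by
      apply Finset.card_le_card_of_injOn σ
      · intro b hb
        simp only [Finset.mem_coe, Finset.mem_filter, Finset.mem_univ, true_and] at hb ⊢
        exact hc b hb
      · exact fun x _ y _ hxy => σ.injective hxy
    have heq : Finset.univ.filter (fun b : Fin n => i ≤ b) =
        insert i (Finset.univ.filter (fun b : Fin n => i < b)) := by
      ext b
      simp only [Finset.mem_filter, Finset.mem_univ, true_and, Finset.mem_insert]
      constructor
      · intro hb; rcases eq_or_lt_of_le hb with h1 | h1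
        · exact Or.inl h1.symm
        · exact Or.inr h1
      · rintro (rfl | h1); · exact le_refl _
        · exact h1.le
    rw [heq, Finset.card_insert_of_notMem (by simp)] at hcard
    omega
  obtain ⟨b, hb1, hb2⟩ := hex
  have hz : (∏ c : Fin n, X (σ c) c) = 0 :=
    Finset.prod_eq_zero (Finset.mem_univ b) (h _ _ hb2 hb1)
  rw [hz, smul_zero]

lemma shadow_aux {n : ℕ} (X : Matrix (Fin n) (Fin n) ℝ)
    (hpos : ∀ a b : Fin n, 0 ≤ X a b)
    (h2 : ∀ a b c d : Fin n, a < b → c < d → X a d * X b c ≤ X a c * X b d)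
    (hdet : X.det ≠ 0) (i j : Fin n) (hle : i ≤ j) (h0 : X i j = 0) :
    ∀ a b : Fin n, a ≤ i → j ≤ b → X a b = 0 := by
  have key : ∀ a b c d : Fin n, a < b → c < d → (X a c = 0 ∨ X b d = 0) →
      X a d = 0 ∨ X b c = 0 := by
    intro a b c d hab hcd hz
    have h := h2 a b c d hab hcd
    have hz' : X a c * X b d = 0 := by rcases hz with h1 | h1 <;> rw [h1] <;> ring
    rw [hz'] at h
    have := mul_nonneg (hpos a d) (hpos b c)
    exact mul_eq_zero.mp (le_antisymm h this)
  by_cases hcol : ∃ r, i < r ∧ X r j ≠ 0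
  · obtain ⟨r, hir, hr⟩ := hcol
    have hrowR : ∀ c, j ≤ c → X i c = 0 := by
      intro c hc
      rcases eq_or_lt_of_le hc with rfl | hc'
      · exact h0
      · rcases key i r j c hir hc' (Or.inl h0) with h | h
        · exact h
        · exact absurd h hr
    have hrow : ∃ c, X i c ≠ 0 := by
      by_contra hcn
      push_neg at hcn
      exact hdet (Matrix.det_eq_zero_of_row_eq_zero i hcn)
    obtain ⟨c, hcne⟩ := hrow
    have hcj : c < j := by
      by_contra hcc
      push_neg at hcc
      exact hcne (hrowR c hcc)
    intro a b ha hb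
    rcases eq_or_lt_of_le ha with rfl | hai
    · exact hrowR b hb
    · rcases key a i c b hai (lt_of_lt_of_le hcj hb) (Or.inr (hrowR b hb)) with h | h
      · exact h
      · exact absurd h hcne
  · push_neg at hcol
    exfalso
    have hcolge : ∀ r, i ≤ r → X r j = 0 := by
      intro r hr
      rcases eq_or_lt_of_le hr with rfl | hr'
      · exact h0
      · exact hcol r hr'
    have hcolne : ∃ s, X s j ≠ 0 := by
      by_contra hcn
      push_neg at hcn
      exact hdet (Matrix.det_eq_zero_of_column_eq_zero j hcn)
    obtain ⟨s, hsne⟩ := hcolne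
    have hsi : s < i := by
      by_contra hss
      push_neg at hss
      exact hsne (hcolge s hss)
    have hrowL : ∀ c, c ≤ j → X i c = 0 := by
      intro c hc
      rcases eq_or_lt_of_le hc with rfl | hc'
      · exact h0
      · rcases key s i c j hsi hc' (Or.inr h0) with h | h
        · exact absurd h hsne
        · exact h
    have hrow : ∃ c, X i c ≠ 0 := by
      by_contra hcn
      push_neg at hcn
      exact hdet (Matrix.det_eq_zero_of_row_eq_zero i hcn)
    obtain ⟨e, hene⟩ := hrow
    have hje : j < e := by
      by_contra hcc
      push_neg at hcc
      exact hene (hrowL e hcc)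
    have hblock : ∀ r c : Fin n, i ≤ r → c ≤ j → X r c = 0 := by
      intro r c hr hc
      rcases eq_or_lt_of_le hr with rfl | hr'
      · exact hrowL c hc
      · rcases key i r c e hr' (lt_of_le_of_lt hc hje) (Or.inl (hrowL c hc)) with h | h
        · exact absurd h hene
        · exact h
    apply hdet
    rw [← Matrix.det_transpose]
    exact det_eq_zero_of_ne_block X.transpose i
      (fun a b hai hib => hblock b a hib (le_trans hai hle))

lemma entry_nonneg' {n k : ℕ} (hk : 2 ≤ k) {X : Matrix (Fin n) (Fin n) ℝ}
    (hXk : IsKNonneg k X) (a b : Fin n) : 0 ≤ X a b := by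
  have h := hXk 1 (by omega) (fun _ => a) (fun _ => b)
    (fun x y hxy => absurd (Subsingleton.elim x y ▸ hxy) (lt_irrefl y))
    (fun x y hxy => absurd (Subsingleton.elim x y ▸ hxy) (lt_irrefl y))
  simpa [Matrix.det_fin_one] using h

lemma minor2_nonneg' {n k : ℕ} (hk : 2 ≤ k) {X : Matrix (Fin n) (Fin n) ℝ}
    (hXk : IsKNonneg k X) {a b c d : Fin n} (hab : a < b) (hcd : c < d) :
    X a d * X b c ≤ X a c * X b d := by
  have hI : StrictMono ![a, b] := by
    intro x y hxy
    fin_cases x <;> fin_cases y <;> simp_all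
  have hJ : StrictMono ![c, d] := by
    intro x y hxy
    fin_cases x <;> fin_cases y <;> simp_all
  have h := hXk 2 hk ![a, b] ![c, d] hI hJ
  rw [Matrix.det_fin_two] at h
  simp only [Matrix.submatrix_apply, Matrix.cons_val_zero, Matrix.cons_val_one,
    Matrix.head_cons] at h
  linarith

/-- Zero entries of an invertible `k`-nonnegative matrix (`k ≥ 2`) cannot lie on the
diagonal, and cast a "shadow" to the northeast (if above the diagonal) or to the
southwest (if below the diagonal). -/
theorem zero_shadow {n k : ℕ} (hk : 2 ≤ k) (hkn : k ≤ n)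
    (X : Matrix (Fin n) (Fin n) ℝ) (hX : IsUnit X) (hXk : IsKNonneg k X)
    (i j : Fin n) (hij : X i j = 0) :
    i ≠ j ∧
    (i < j → ∀ i' j' : Fin n, i' ≤ i → j ≤ j' → X i' j' = 0) ∧
    (j < i → ∀ i' j' : Fin n, i ≤ i' → j' ≤ j → X i' j' = 0) := by
  have hdet : X.det ≠ 0 := by
    have := (Matrix.isUnit_iff_isUnit_det X).mp hX
    exact this.ne_zero
  have hpos : ∀ a b : Fin n, 0 ≤ X a b := entry_nonneg' hk hXk
  have h2 : ∀ a b c d : Fin n, a < b → c < d → X a d * X b c ≤ X a c * X b d :=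
    fun a b c d hab hcd => minor2_nonneg' hk hXk hab hcd
  have hdetT : X.transpose.det ≠ 0 := by rwa [Matrix.det_transpose]
  have hposT : ∀ a b : Fin n, 0 ≤ X.transpose a b := fun a b => hpos b a
  have h2T : ∀ a b c d : Fin n, a < b → c < d →
      X.transpose a d * X.transpose b c ≤ X.transpose a c * X.transpose b d := by
    intro a b c d hab hcd
    simpa [Matrix.transpose_apply, mul_comm] using h2 c d a b hcd hab
  refine ⟨?_, ?_, ?_⟩
  · intro heq
    subst heq
    exact hdet (det_eq_zero_of_ne_block X i
      (shadow_aux X hpos h2 hdet i i le_rfl hij))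
  · intro hlt i' j' hi' hj'
    exact shadow_aux X hpos h2 hdet i j hlt.le hij i' j' hi' hj'
  · intro hlt i' j' hi' hj'
    have := shadow_aux X.transpose hposT h2T hdetT j i hlt.le hij j' i' hj' hi'
    exact this
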